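/- For every n×n complex matrix A, the j-th largest eigenvalue of Re A is at most the j-th largest singular value of A: λ_j(Re A) ≤ s_j(A) for j = 1, …, n (Fan–Hoffman inequality). -/

import Mathlib

open Matrix
open scoped ComplexOrder

noncomputable section
namespace Paper

variable {n : ℕ}

/-- Real part `(A + Aᴴ)/2`. -/
def re (A : Matrix (Fin n) (Fin n) ℂ) : Matrix (Fin n) (Fin n) ℂ := (2⁻¹ : ℂ) • (A + Aᴴ)

/-- Imaginary part `(A - Aᴴ)/(2i)`. -/
def im (A : Matrix (Fin n) (Fin n) ℂ) : Matrix (Fin n) (Fin n) ℂ :=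
  (2 * Complex.I)⁻¹ • (A - Aᴴ)

/-- The sector `S_α`. -/
def sector (α : ℝ) : Set ℂ := {z | 0 < z.re ∧ |z.im| ≤ z.re * Real.tan α}

/-- Numerical range of a matrix. -/
def numericalRange (A : Matrix (Fin n) (Fin n) ℂ) : Set ℂ :=
  {z | ∃ x : Fin n → ℂ, star x ⬝ᵥ x = 1 ∧ z = star x ⬝ᵥ (A *ᵥ x)}

/-- Loewner order: `X ≤ Y` iff `Y - X` is positive semidefinite. -/
def loewnerLE (X Y : Matrix (Fin n) (Fin n) ℂ) : Prop := (Y - X).PosSemidef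

lemma re_isHermitian (A : Matrix (Fin n) (Fin n) ℂ) : (re A).IsHermitian := by
  show ((2⁻¹ : ℂ) • (A + Aᴴ))ᴴ = (2⁻¹ : ℂ) • (A + Aᴴ)
  rw [Matrix.conjTranspose_smul, Matrix.conjTranspose_add,
    Matrix.conjTranspose_conjTranspose, add_comm Aᴴ A]
  simp

/-- The `j`-th largest element of `v` (descending sort). -/
def nthLargest (v : Fin n → ℝ) (j : Fin n) : ℝ :=
  ((List.ofFn v).mergeSort (fun a b => decide (b ≤ a))).get
    (Fin.cast (by simp) j)

/-- `j`-th largest eigenvalue of a Hermitian matrix. -/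
def eigDesc {A : Matrix (Fin n) (Fin n) ℂ} (hA : A.IsHermitian) (j : Fin n) : ℝ :=
  nthLargest hA.eigenvalues j

/-- `j`-th largest singular value. -/
def singular (A : Matrix (Fin n) (Fin n) ℂ) (j : Fin n) : ℝ :=
  nthLargest (fun i => Real.sqrt ((Matrix.isHermitian_conjTranspose_mul_self A).eigenvalues i)) j

/-- `Matrix.PosSemidef.sqrt` as defined in the older Mathlib (removed since). -/
def psdSqrt {A : Matrix (Fin n) (Fin n) ℂ} (hA : A.PosSemidef) : Matrix (Fin n) (Fin n) ℂ :=
  hA.1.eigenvectorUnitary.1 * diagonal ((↑) ∘ (Real.sqrt ∘ hA.1.eigenvalues)) *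
    (star hA.1.eigenvectorUnitary : Matrix (Fin n) (Fin n) ℂ)

/-- Weighted geometric mean of positive definite matrices. -/
def sharp (v : ℝ) {A B : Matrix (Fin n) (Fin n) ℂ} (hA : A.PosDef) (hB : B.PosDef) :
    Matrix (Fin n) (Fin n) ℂ :=
  psdSqrt hA.posSemidef *
    (Matrix.isHermitian_mul_mul_conjTranspose (psdSqrt hA.posSemidef)⁻¹ hB.1).cfc
      (fun x => Real.rpow x v) * psdSqrt hA.posSemidef

/-- Weighted arithmetic mean. -/
def arith (v : ℝ) (A B : Matrix (Fin n) (Fin n) ℂ) : Matrix (Fin n) (Fin n) ℂ :=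
  (1 - v) • A + v • B

/-- Weighted harmonic mean. -/
def harm (v : ℝ) (A B : Matrix (Fin n) (Fin n) ℂ) : Matrix (Fin n) (Fin n) ℂ :=
  ((1 - v) • A⁻¹ + v • B⁻¹)⁻¹

/-- Kantorovich constant. -/
def K (h : ℝ) : ℝ := (h + 1) ^ 2 / (4 * h)


lemma countP_ofFn (v : Fin n → ℝ) (p : ℝ → Prop) [DecidablePred p] :
    (List.ofFn v).countP (fun a => decide (p a)) =
      (Finset.univ.filter fun i => p (v i)).card := by
  rw [List.ofFn_eq_map, List.countP_eq_length_filter, List.filter_map, List.length_map]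
  rfl

lemma sorted_mergeSort_desc (v : Fin n → ℝ) :
    ((List.ofFn v).mergeSort (fun a b => decide (b ≤ a))).Pairwise (fun a b => b ≤ a) := by
  have h := List.pairwise_mergeSort (le := fun a b : ℝ => decide (b ≤ a))
    (fun a b c hab hbc => by
      simp only [decide_eq_true_iff] at *; exact hbc.trans hab)
    (fun a b => by simpa using le_total b a) (List.ofFn v)
  exact h.imp (fun h => by simpa using h)

lemma length_mergeSort' (v : Fin n → ℝ) :
    ((List.ofFn v).mergeSort (fun a b => decide (b ≤ a))).length = n := by simp

-- entries after index j are ≤ nthLargest v j ; entries up to j are ≥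
lemma nthLargest_card_ge (v : Fin n → ℝ) (j : Fin n) :
    (j : ℕ) + 1 ≤ (Finset.univ.filter fun i => nthLargest v j ≤ v i).card := by
  classical
  set L := (List.ofFn v).mergeSort (fun a b => decide (b ≤ a)) with hL
  have hlen : L.length = n := by simp [hL]
  have hsort := sorted_mergeSort_desc v
  have hperm : L.Perm (List.ofFn v) := List.mergeSort_perm _ _
  set lam := nthLargest v j with hlam
  have key : ∀ a ∈ L.take ((j : ℕ) + 1), lam ≤ a := by
    intro a ha
    obtain ⟨k, hk, hka⟩ := List.mem_take_iff_getElem.mp ha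
    have hk' : k < (j : ℕ) + 1 := lt_of_lt_of_le hk (min_le_left _ _)
    have hkL : k < L.length := by omega
    have hjL : (j : ℕ) < L.length := by omega
    have := hsort.rel_get_of_le (a := ⟨k, hkL⟩) (b := ⟨(j : ℕ), hjL⟩)
      (by simpa using Nat.lt_succ_iff.mp hk')
    simp only [List.get_eq_getElem] at this
    rw [← hka]
    exact this
  have h1 : L.countP (fun a => decide (lam ≤ a)) ≥ (j : ℕ) + 1 := by
    have hsplit : L = L.take ((j : ℕ) + 1) ++ L.drop ((j : ℕ) + 1) :=
      (List.take_append_drop _ _).symm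
    calc (j : ℕ) + 1 = (L.take ((j : ℕ) + 1)).length := by
            rw [List.length_take, hlen]; omega
      _ = (L.take ((j : ℕ) + 1)).countP (fun a => decide (lam ≤ a)) :=
            (List.countP_eq_length.mpr (fun a ha => by simpa using key a ha)).symm
      _ ≤ L.countP (fun a => decide (lam ≤ a)) := by
            conv_rhs => rw [hsplit]
            rw [List.countP_append]; omega
  rw [← countP_ofFn v (fun a => lam ≤ a)]
  calc (j:ℕ)+1 ≤ L.countP (fun a => decide (lam ≤ a)) := h1
    _ = (List.ofFn v).countP (fun a => decide (lam ≤ a)) := hperm.countP_eq _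

lemma nthLargest_card_le (v : Fin n → ℝ) (j : Fin n) :
    n - (j : ℕ) ≤ (Finset.univ.filter fun i => v i ≤ nthLargest v j).card := by
  classical
  set L := (List.ofFn v).mergeSort (fun a b => decide (b ≤ a)) with hL
  have hlen : L.length = n := by simp [hL]
  have hsort := sorted_mergeSort_desc v
  have hperm : L.Perm (List.ofFn v) := List.mergeSort_perm _ _
  set lam := nthLargest v j with hlam
  have key : ∀ a ∈ L.drop (j : ℕ), a ≤ lam := by
    intro a ha
    obtain ⟨k, hk, hka⟩ := List.mem_drop_iff_getElem.mp ha
    have hjL : (j : ℕ) < L.length := by omega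
    have hkL : (j : ℕ) + k < L.length := by omega
    have := hsort.rel_get_of_le (a := ⟨(j : ℕ), hjL⟩) (b := ⟨(j : ℕ) + k, hkL⟩)
      (by simp)
    simp only [List.get_eq_getElem] at this
    rw [← hka]
    exact this
  have h1 : L.countP (fun a => decide (a ≤ lam)) ≥ n - (j : ℕ) := by
    have hsplit : L = L.take (j : ℕ) ++ L.drop (j : ℕ) := (List.take_append_drop _ _).symm
    calc n - (j : ℕ) = (L.drop (j : ℕ)).length := by rw [List.length_drop, hlen]
      _ = (L.drop (j : ℕ)).countP (fun a => decide (a ≤ lam)) :=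
            (List.countP_eq_length.mpr (fun a ha => by simpa using key a ha)).symm
      _ ≤ L.countP (fun a => decide (a ≤ lam)) := by
            conv_rhs => rw [hsplit]
            rw [List.countP_append]; omega
  rw [← countP_ofFn v (fun a => a ≤ lam)]
  calc n - (j:ℕ) ≤ L.countP (fun a => decide (a ≤ lam)) := h1
    _ = (List.ofFn v).countP (fun a => decide (a ≤ lam)) := hperm.countP_eq _

lemma inner_eq_star_dotProduct' (x y : EuclideanSpace ℂ (Fin n)) :
    inner ℂ x y = star ((WithLp.equiv 2 (Fin n → ℂ)) x) ⬝ᵥ (WithLp.equiv 2 (Fin n → ℂ)) y := by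
  rw [EuclideanSpace.inner_eq_star_dotProduct, dotProduct_comm]; rfl

lemma quad_repr {M : Matrix (Fin n) (Fin n) ℂ} (hM : M.IsHermitian)
    (S : Finset (Fin n)) (x : EuclideanSpace ℂ (Fin n))
    (hx : x ∈ Submodule.span ℂ (⇑hM.eigenvectorBasis '' ↑S)) :
    ∃ w : Fin n → ℝ, (∀ i, 0 ≤ w i) ∧
      (star ((WithLp.equiv 2 (Fin n → ℂ)) x) ⬝ᵥ ((WithLp.equiv 2 (Fin n → ℂ)) x)).re
        = ∑ i ∈ S, w i ∧
      (star ((WithLp.equiv 2 (Fin n → ℂ)) x) ⬝ᵥ (M *ᵥ (WithLp.equiv 2 (Fin n → ℂ)) x)).re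
        = ∑ i ∈ S, hM.eigenvalues i * w i := by
  classical
  set b := hM.eigenvectorBasis with hb
  have hinj : Function.Injective ⇑b := b.orthonormal.linearIndependent.injective
  rw [← Finset.coe_image] at hx
  obtain ⟨f, -, hf⟩ := Submodule.mem_span_finset.mp hx
  set g : Fin n → ℂ := fun i => f (b i) with hg
  have hx' : x = ∑ i ∈ S, g i • b i := by
    rw [← hf, Finset.sum_image (fun i _ k _ h => hinj h)]
  set μ := hM.eigenvalues with hμ
  set y : EuclideanSpace ℂ (Fin n) := ∑ i ∈ S, ((μ i : ℂ) * g i) • b i with hy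
  set L := WithLp.linearEquiv 2 ℂ (Fin n → ℂ) with hL
  have hLe : ⇑L = ⇑(WithLp.equiv 2 (Fin n → ℂ)) := rfl
  have hMx : M *ᵥ (WithLp.equiv 2 (Fin n → ℂ)) x = (WithLp.equiv 2 (Fin n → ℂ)) y := by
    rw [← hLe]
    calc M *ᵥ L x = M *ᵥ ∑ i ∈ S, g i • L (b i) := by
          rw [hx', map_sum]; simp only [_root_.map_smul]
      _ = ∑ i ∈ S, g i • (M *ᵥ L (b i)) := by
          simp only [← Matrix.mulVecLin_apply, map_sum, _root_.map_smul]
      _ = ∑ i ∈ S, ((μ i : ℂ) * g i) • L (b i) := by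
          refine Finset.sum_congr rfl fun i _ => ?_
          rw [hL, hb]
          show g i • (M *ᵥ (hM.eigenvectorBasis i).ofLp) = _
          rw [hM.mulVec_eigenvectorBasis, RCLike.real_smul_eq_coe_smul (K := ℂ),
            smul_smul, mul_comm]
          rfl
      _ = L y := by rw [hy, map_sum]; simp only [_root_.map_smul]
  refine ⟨fun i => Complex.normSq (g i), fun i => Complex.normSq_nonneg _, ?_, ?_⟩
  · rw [← inner_eq_star_dotProduct']
    conv_lhs => rw [hx']
    rw [b.orthonormal.inner_sum g g S]
    rw [Complex.re_sum]
    refine Finset.sum_congr rfl fun i _ => ?_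
    rw [mul_comm, Complex.mul_conj]
    simp
  · rw [hMx, ← inner_eq_star_dotProduct']
    conv_lhs => rw [hx', hy]
    rw [b.orthonormal.inner_sum g (fun i => (μ i : ℂ) * g i) S]
    rw [Complex.re_sum]
    refine Finset.sum_congr rfl fun i _ => ?_
    have : (starRingEnd ℂ) (g i) * ((μ i : ℂ) * g i)
        = (μ i : ℂ) * Complex.normSq (g i) := by
      rw [← Complex.mul_conj]; ring
    rw [this]
    simp

lemma finrank_span_onb_image (b : OrthonormalBasis (Fin n) ℂ (EuclideanSpace ℂ (Fin n)))
    (S : Finset (Fin n)) :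
    Module.finrank ℂ (Submodule.span ℂ (⇑b '' ↑S)) = S.card := by
  classical
  have hinj : Function.Injective ⇑b := b.orthonormal.linearIndependent.injective
  have hli : LinearIndependent ℂ (fun v : (⇑b '' (↑S : Set (Fin n))) =>
      (v : EuclideanSpace ℂ (Fin n))) :=
    ((linearIndepOn_id_range_iff b.orthonormal.linearIndependent.injective).mpr b.orthonormal.linearIndependent).mono (Set.image_subset_range _ _)
  rw [finrank_span_set_eq_card hli]
  simp [Set.toFinset_image, Finset.card_image_of_injective _ hinj]

/-- Fan–Hoffman inequality. -/
theorem eig_re_le_singular (A : Matrix (Fin n) (Fin n) ℂ) (j : Fin n) :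
    eigDesc (re_isHermitian A) j ≤ singular A j := by
  classical
  set hH := re_isHermitian A with hhH
  set μ := hH.eigenvalues with hμ
  set hB := Matrix.isHermitian_conjTranspose_mul_self A with hhB
  set β := hB.eigenvalues with hβ
  set ν : Fin n → ℝ := fun i => Real.sqrt (β i) with hν
  set lam := eigDesc hH j with hlam
  set s := singular A j with hs
  have hβ0 : ∀ i, 0 ≤ β i := fun i =>
    (Matrix.posSemidef_conjTranspose_mul_self A).eigenvalues_nonneg i
  have hν0 : ∀ i, 0 ≤ ν i := fun i => Real.sqrt_nonneg _
  have hlam' : lam = nthLargest μ j := rfl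
  have hs' : s = nthLargest ν j := rfl
  set T₁ := Finset.univ.filter (fun i => lam ≤ μ i) with hT₁
  set T₂ := Finset.univ.filter (fun i => ν i ≤ s) with hT₂
  have hcard1 : (j : ℕ) + 1 ≤ T₁.card := by rw [hT₁, hlam']; exact nthLargest_card_ge μ j
  have hcard2 : n - (j : ℕ) ≤ T₂.card := by rw [hT₂, hs']; exact nthLargest_card_le ν j
  -- s is nonnegative
  have hs0 : 0 ≤ s := by
    have hne : T₂.Nonempty := by
      rw [← Finset.card_pos]
      have : (j : ℕ) < n := j.2
      omega
    obtain ⟨i, hi⟩ := hne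
    have := (Finset.mem_filter.mp hi).2
    exact le_trans (hν0 i) this
  -- subspaces
  set V := Submodule.span ℂ (⇑hH.eigenvectorBasis '' ↑T₁) with hV
  set W := Submodule.span ℂ (⇑hB.eigenvectorBasis '' ↑T₂) with hW
  have hdimV : Module.finrank ℂ V = T₁.card := finrank_span_onb_image _ _
  have hdimW : Module.finrank ℂ W = T₂.card := finrank_span_onb_image _ _
  have hsum := Submodule.finrank_sup_add_finrank_inf_eq V W
  have hsup : Module.finrank ℂ ↥(V ⊔ W) ≤ n := by
    have := Submodule.finrank_le (V ⊔ W)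
    rwa [finrank_euclideanSpace_fin] at this
  have hinf : 0 < Module.finrank ℂ ↥(V ⊓ W) := by
    have : (j : ℕ) < n := j.2
    omega
  have hbot : V ⊓ W ≠ ⊥ := by
    intro h
    rw [h, finrank_bot] at hinf
    exact lt_irrefl 0 hinf
  obtain ⟨x, hx, hx0⟩ := Submodule.exists_mem_ne_zero_of_ne_bot hbot
  set X := (WithLp.equiv 2 (Fin n → ℂ)) x with hX
  obtain ⟨w, hw0, hwN, hwQ⟩ := quad_repr hH T₁ x hx.1
  obtain ⟨u, hu0, huN, huQ⟩ := quad_repr hB T₂ x hx.2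
  set N := (star X ⬝ᵥ X).re with hN
  -- N = ‖x‖²
  have hNnorm : N = ‖x‖ ^ 2 := by
    rw [hN, hX, ← inner_eq_star_dotProduct']
    simpa using inner_self_eq_norm_sq (𝕜 := ℂ) x
  have hNpos : 0 < N := by
    rw [hNnorm]
    exact pow_pos (norm_pos_iff.mpr hx0) 2
  -- h1 : lam * N ≤ re (star X ⬝ᵥ (re A *ᵥ X))
  have h1 : lam * N ≤ (star X ⬝ᵥ (re A *ᵥ X)).re := by
    rw [hwQ, hwN, Finset.mul_sum]
    refine Finset.sum_le_sum fun i hi => ?_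
    exact mul_le_mul_of_nonneg_right (Finset.mem_filter.mp hi).2 (hw0 i)
  -- z and h2
  set z := star X ⬝ᵥ (A *ᵥ X) with hz
  have hconj : star X ⬝ᵥ (Aᴴ *ᵥ X) = (starRingEnd ℂ) z := by
    rw [Matrix.star_dotProduct, Matrix.star_mulVec, Matrix.conjTranspose_conjTranspose,
      ← Matrix.dotProduct_mulVec]
    rfl
  have h2 : (star X ⬝ᵥ (re A *ᵥ X)).re = z.re := by
    have : re A *ᵥ X = (2⁻¹ : ℂ) • (A *ᵥ X + Aᴴ *ᵥ X) := by
      show ((2⁻¹ : ℂ) • (A + Aᴴ)) *ᵥ X = _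
      rw [Matrix.smul_mulVec, Matrix.add_mulVec]
    rw [this, dotProduct_smul, dotProduct_add, hconj, ← hz, Complex.add_conj]
    simp
  -- Cauchy-Schwarz
  set yA : EuclideanSpace ℂ (Fin n) := (WithLp.equiv 2 (Fin n → ℂ)).symm (A *ᵥ X) with hyA
  have hzinner : z = inner ℂ x yA := by
    rw [inner_eq_star_dotProduct']
    simp [hyA, hX, hz]
  have h3 : z.re ≤ ‖x‖ * ‖yA‖ := by
    calc z.re ≤ ‖z‖ := Complex.re_le_norm z
      _ = ‖(inner ℂ x yA : ℂ)‖ := by rw [hzinner]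
      _ ≤ ‖x‖ * ‖yA‖ := norm_inner_le_norm x yA
  -- ‖yA‖² = QB ≤ s² N
  have h4 : ‖yA‖ ^ 2 = (star X ⬝ᵥ ((Aᴴ * A) *ᵥ X)).re := by
    have h4' : (inner ℂ yA yA : ℂ) = star X ⬝ᵥ ((Aᴴ * A) *ᵥ X) := by
      rw [inner_eq_star_dotProduct']
      show star (A *ᵥ X) ⬝ᵥ (A *ᵥ X) = _
      rw [Matrix.star_mulVec, ← Matrix.dotProduct_mulVec, Matrix.mulVec_mulVec]
    have h4'' := inner_self_eq_norm_sq (𝕜 := ℂ) yA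
    rw [h4'] at h4''
    simpa using h4''.symm
  have h5 : (star X ⬝ᵥ ((Aᴴ * A) *ᵥ X)).re ≤ s ^ 2 * N := by
    rw [huQ, huN, Finset.mul_sum]
    refine Finset.sum_le_sum fun i hi => ?_
    have hile : ν i ≤ s := (Finset.mem_filter.mp hi).2
    have : β i ≤ s ^ 2 := by
      have : β i = ν i ^ 2 := (Real.sq_sqrt (hβ0 i)).symm
      rw [this]
      exact pow_le_pow_left₀ (hν0 i) hile 2
    exact mul_le_mul_of_nonneg_right this (hu0 i)
  have h6 : ‖yA‖ ≤ s * ‖x‖ := by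
    have h7 : ‖yA‖ ^ 2 ≤ (s * ‖x‖) ^ 2 := by
      rw [h4, mul_pow, ← hNnorm]
      exact h5
    calc ‖yA‖ = Real.sqrt (‖yA‖ ^ 2) := (Real.sqrt_sq (norm_nonneg _)).symm
      _ ≤ Real.sqrt ((s * ‖x‖) ^ 2) := Real.sqrt_le_sqrt h7
      _ = s * ‖x‖ := Real.sqrt_sq (by positivity)
  have final : lam * N ≤ s * N := by
    calc lam * N ≤ (star X ⬝ᵥ (re A *ᵥ X)).re := h1
      _ = z.re := h2
      _ ≤ ‖x‖ * ‖yA‖ := h3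
      _ ≤ ‖x‖ * (s * ‖x‖) := mul_le_mul_of_nonneg_left h6 (norm_nonneg _)
      _ = s * N := by rw [hNnorm]; ring
  exact le_of_mul_le_mul_right final hNpos


end Paper
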